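/- Let r > 0, let μ be a finite Borel measure on ℝ with μ(ℝ \ [−r, 0]) = 0, let p ≥ 1 be a real number, let ψ : ℝ → ℝ be measurable, and let α > 0. Then ∫₀^{α} ( ∫_{θ ∈ [−r,0]} |ψ(t + θ)| · 1_{t + θ ≥ 0} dμ(θ) )^p dt ≤ μ([max(−α, −r), 0])^p · ∫₀^{α} |ψ(s)|^p ds, where all integrals are Lebesgue integrals of nonnegative measurable functions with values in [0, ∞]. In particular the constant μ([max(−α,−r), 0])^p tends to (μ({0}))^p as α → 0⁺. -/

import Mathlib

open MeasureTheory Filter Topology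
open scoped ENNReal

lemma aux_holder {X : Type*} [MeasurableSpace X] (ν : Measure X) {f : X → ℝ≥0∞}
    (hf : AEMeasurable f ν) {p : ℝ} (hp : 1 ≤ p) :
    (∫⁻ x, f x ∂ν) ^ p ≤ ν Set.univ ^ (p - 1) * ∫⁻ x, f x ^ p ∂ν := by
  rcases eq_or_lt_of_le hp with h1 | h1
  · simp [← h1]
  · have hp0 : (0:ℝ) < p := lt_trans one_pos h1
    set q := Real.conjExponent p with hq
    have hpq : p.HolderConjugate q := Real.HolderConjugate.conjExponent h1
    have hqpos : 0 < q := hpq.symm.pos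
    have H := ENNReal.lintegral_mul_le_Lp_mul_Lq ν hpq hf
      (aemeasurable_const (b := (1:ℝ≥0∞)))
    simp only [Pi.mul_apply, mul_one, ENNReal.one_rpow, lintegral_const,
      lintegral_one, one_mul] at H
    -- H : ∫⁻ f ≤ (∫⁻ f^p)^(1/p) * (ν univ)^(1/q)
    have hqp : (1 / q) * p = p - 1 := by
      rw [hq, Real.conjExponent]
      field_simp
    calc (∫⁻ x, f x ∂ν) ^ p
        ≤ ((∫⁻ x, f x ^ p ∂ν) ^ (1/p) * ν Set.univ ^ (1/q)) ^ p :=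
          ENNReal.rpow_le_rpow H hp0.le
      _ = (∫⁻ x, f x ^ p ∂ν) ^ ((1/p) * p) * ν Set.univ ^ ((1/q) * p) := by
          rw [ENNReal.mul_rpow_of_nonneg _ _ hp0.le, ENNReal.rpow_mul, ENNReal.rpow_mul]
      _ = ν Set.univ ^ (p - 1) * ∫⁻ x, f x ^ p ∂ν := by
          rw [one_div_mul_cancel hp0.ne', ENNReal.rpow_one, hqp, mul_comm]

/-- Let `μ` be a finite Borel measure on `ℝ` concentrated on `[-r, 0]`,
`p ≥ 1`, `ψ` measurable, `α > 0`. Then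
`∫₀^α (∫_{[-r,0]} |ψ(t+θ)| 1_{t+θ≥0} dμ(θ))^p dt ≤ μ([max(-α,-r),0])^p ∫₀^α |ψ|^p`,
and the constant `μ([max(-α,-r),0])^p` tends to `μ({0})^p` as `α → 0⁺`. -/
theorem stmt_16 (r : ℝ) (hr : 0 < r) (μ : Measure ℝ) [IsFiniteMeasure μ]
    (hμ : μ (Set.Icc (-r) 0)ᶜ = 0)
    (p : ℝ) (hp : 1 ≤ p) (ψ : ℝ → ℝ) (hψ : Measurable ψ) (α : ℝ) (hα : 0 < α) :
    (∫⁻ t in Set.Icc (0 : ℝ) α,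
        (∫⁻ θ in Set.Icc (-r) 0,
          ENNReal.ofReal (|ψ (t + θ)|) * (if 0 ≤ t + θ then 1 else 0) ∂μ) ^ p
      ≤ (μ (Set.Icc (max (-α) (-r)) 0)) ^ p *
        ∫⁻ s in Set.Icc (0 : ℝ) α, ENNReal.ofReal (|ψ s| ^ p)) ∧
    Tendsto (fun a : ℝ => (μ (Set.Icc (max (-a) (-r)) 0)) ^ p)
      (𝓝[>] (0 : ℝ)) (𝓝 ((μ {0}) ^ p)) := by
  have hp0 : (0:ℝ) < p := lt_of_lt_of_le one_pos hp
  constructor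
  · set S : Set ℝ := Set.Icc (max (-α) (-r)) 0 with hS
    have hSsub : S ⊆ Set.Icc (-r) 0 := Set.Icc_subset_Icc (le_max_right _ _) le_rfl
    have hSm : MeasurableSet S := measurableSet_Icc
    set c : ℝ≥0∞ := μ S with hc
    have hc_ne_top : c ≠ ⊤ := measure_ne_top μ S
    set G : ℝ → ℝ≥0∞ := fun s => ENNReal.ofReal (|ψ s| ^ p) with hG
    have mG : Measurable G :=
      ENNReal.measurable_ofReal.comp ((Real.continuous_rpow_const hp0.le).measurable.comp hψ.abs)
    -- measurability of the two-variable integrand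
    have mF2 : Measurable fun q : ℝ × ℝ =>
        G (q.1 + q.2) * (if 0 ≤ q.1 + q.2 then (1:ℝ≥0∞) else 0) := by
      refine (mG.comp (measurable_fst.add measurable_snd)).mul ?_
      exact Measurable.ite (measurableSet_le measurable_const
        (measurable_fst.add measurable_snd)) measurable_const measurable_const
    have mB : Measurable fun t : ℝ => ∫⁻ θ in S, G (t + θ) *
        (if 0 ≤ t + θ then (1:ℝ≥0∞) else 0) ∂μ :=
      (Measurable.lintegral_prod_right' (ν := μ.restrict S) mF2)
    -- pointwise bound for t ∈ [0, α]
    have key : ∀ t ∈ Set.Icc (0:ℝ) α,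
        (∫⁻ θ in Set.Icc (-r) 0,
            ENNReal.ofReal (|ψ (t + θ)|) * (if 0 ≤ t + θ then 1 else 0) ∂μ) ^ p
          ≤ c ^ (p - 1) * ∫⁻ θ in S, G (t + θ) * (if 0 ≤ t + θ then (1:ℝ≥0∞) else 0) ∂μ := by
      intro t ht
      set f1 : ℝ → ℝ≥0∞ := fun θ =>
        ENNReal.ofReal (|ψ (t + θ)|) * (if 0 ≤ t + θ then 1 else 0) with hf1
      have mf1 : Measurable f1 := by
        refine (ENNReal.measurable_ofReal.comp
          ((hψ.comp (measurable_const.add measurable_id)).abs)).mul ?_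
        exact Measurable.ite (measurableSet_le measurable_const
          (measurable_const.add measurable_id)) measurable_const measurable_const
      -- restrict the inner integral to S
      have step1 : (∫⁻ θ in Set.Icc (-r) 0, f1 θ ∂μ) = ∫⁻ θ in S, f1 θ ∂μ := by
        have heq : ∀ᵐ θ ∂μ, θ ∈ Set.Icc (-r) (0:ℝ) → f1 θ = S.indicator f1 θ := by
          refine Filter.Eventually.of_forall fun θ hθ => ?_
          by_cases hθS : θ ∈ S
          · rw [Set.indicator_of_mem hθS]
          · rw [Set.indicator_of_notMem hθS]
            have hθ0 : θ < max (-α) (-r) := by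
              by_contra h
              exact hθS ⟨not_lt.mp h, hθ.2⟩
            have : θ < -α := by
              rcases lt_max_iff.mp hθ0 with h | h
              · exact h
              · exact absurd h (not_lt.mpr hθ.1)
            have hneg : ¬ (0 ≤ t + θ) := by
              push_neg
              have := ht.2
              linarith
            simp [hf1, hneg]
        rw [setLIntegral_congr_fun_ae measurableSet_Icc heq, lintegral_indicator hSm,
          Measure.restrict_restrict hSm, Set.inter_eq_self_of_subset_left hSsub]
      rw [step1]
      -- apply Hölder on μ.restrict S
      have H := aux_holder (μ.restrict S) mf1.aemeasurable hp
      rw [Measure.restrict_apply_univ] at H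
      refine H.trans (le_of_eq ?_)
      congr 1
      refine lintegral_congr fun θ => ?_
      rw [hf1]
      by_cases h : 0 ≤ t + θ
      · simp only [h, if_true, mul_one]
        exact ENNReal.ofReal_rpow_of_nonneg (abs_nonneg _) hp0.le
      · simp [h, ENNReal.zero_rpow_of_pos hp0]
    -- integrate the pointwise bound
    calc (∫⁻ t in Set.Icc (0 : ℝ) α,
        (∫⁻ θ in Set.Icc (-r) 0,
          ENNReal.ofReal (|ψ (t + θ)|) * (if 0 ≤ t + θ then 1 else 0) ∂μ) ^ p)
        ≤ ∫⁻ t in Set.Icc (0:ℝ) α,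
            c ^ (p - 1) * ∫⁻ θ in S, G (t + θ) * (if 0 ≤ t + θ then (1:ℝ≥0∞) else 0) ∂μ :=
          setLIntegral_mono (measurable_const.mul mB) key
      _ = c ^ (p - 1) * ∫⁻ t in Set.Icc (0:ℝ) α,
            ∫⁻ θ in S, G (t + θ) * (if 0 ≤ t + θ then (1:ℝ≥0∞) else 0) ∂μ :=
          lintegral_const_mul' _ _ (ENNReal.rpow_ne_top_of_nonneg (by linarith) hc_ne_top)
      _ = c ^ (p - 1) * ∫⁻ θ in S,
            (∫⁻ t in Set.Icc (0:ℝ) α, G (t + θ) * (if 0 ≤ t + θ then (1:ℝ≥0∞) else 0)) ∂μ := by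
          congr 1
          exact lintegral_lintegral_swap (μ := volume.restrict (Set.Icc (0:ℝ) α))
            (ν := μ.restrict S)
            (f := fun t θ => G (t + θ) * if 0 ≤ t + θ then (1:ℝ≥0∞) else 0) mF2.aemeasurable
      _ ≤ c ^ (p - 1) * ∫⁻ _ in S, (∫⁻ s in Set.Icc (0:ℝ) α, G s) ∂μ := by
          refine mul_le_mul_right ?_ _
          refine setLIntegral_mono (g := fun _ => ∫⁻ s in Set.Icc (0:ℝ) α, G s)
            measurable_const fun θ hθ => ?_
          have hθ0 : θ ≤ 0 := hθ.2
          -- translation argument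
          set K : ℝ → ℝ≥0∞ := fun u =>
            (Set.Icc θ (α + θ)).indicator (fun u => G u * (if 0 ≤ u then (1:ℝ≥0∞) else 0)) u
            with hK
          calc ∫⁻ t in Set.Icc (0:ℝ) α, G (t + θ) * (if 0 ≤ t + θ then (1:ℝ≥0∞) else 0)
              = ∫⁻ t, (Set.Icc (0:ℝ) α).indicator
                  (fun t => G (t + θ) * (if 0 ≤ t + θ then (1:ℝ≥0∞) else 0)) t :=
                (lintegral_indicator measurableSet_Icc _).symm
            _ = ∫⁻ t, K (t + θ) := by
                refine lintegral_congr fun t => ?_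
                have hmem : t ∈ Set.Icc (0:ℝ) α ↔ t + θ ∈ Set.Icc θ (α + θ) := by
                  constructor <;> intro h <;> exact ⟨by linarith [h.1, h.2], by linarith [h.1, h.2]⟩
                simp only [hK, Set.indicator_apply]
                exact if_congr hmem rfl rfl
            _ = ∫⁻ u, K u := lintegral_add_right_eq_self K θ
            _ ≤ ∫⁻ u, (Set.Icc (0:ℝ) α).indicator G u := by
                refine lintegral_mono fun u => ?_
                simp only [hK, Set.indicator_apply]
                by_cases h0 : 0 ≤ u
                · by_cases h : u ∈ Set.Icc θ (α + θ)
                  · have hu : u ∈ Set.Icc (0:ℝ) α := ⟨h0, by linarith [h.2]⟩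
                    simp [h, hu, h0]
                  · simp [h]
                · by_cases h : u ∈ Set.Icc θ (α + θ) <;> simp [h, h0]
            _ = ∫⁻ s in Set.Icc (0:ℝ) α, G s := lintegral_indicator measurableSet_Icc _
      _ = c ^ (p - 1) * (c * ∫⁻ s in Set.Icc (0:ℝ) α, G s) := by
          rw [setLIntegral_const, mul_comm (∫⁻ s in Set.Icc (0:ℝ) α, G s) c]
      _ = c ^ p * ∫⁻ s in Set.Icc (0:ℝ) α, G s := by
          rw [← mul_assoc]
          congr 1
          nth_rewrite 2 [← ENNReal.rpow_one c]
          rw [← ENNReal.rpow_add_of_nonneg _ _ (by linarith) zero_le_one, sub_add_cancel]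
  · -- the limit of the constant
    have h1 : Tendsto (fun a : ℝ => μ (Set.Icc (max (-a) (-r)) 0)) (𝓝[>] (0:ℝ)) (𝓝 (μ {0})) := by
      have := tendsto_measure_biInter_gt (μ := μ)
        (s := fun a : ℝ => Set.Icc (max (-a) (-r)) 0) (a := 0)
        (fun a _ => measurableSet_Icc.nullMeasurableSet)
        (fun i j _ hij => Set.Icc_subset_Icc (max_le_max (neg_le_neg hij) le_rfl) le_rfl)
        ⟨1, one_pos, measure_ne_top μ _⟩
      have hinter : (⋂ a > (0:ℝ), Set.Icc (max (-a) (-r)) 0) = {0} := by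
        ext x
        simp only [Set.mem_iInter, Set.mem_Icc, Set.mem_singleton_iff]
        constructor
        · intro h
          have hx0 : x ≤ 0 := (h 1 one_pos).2
          by_contra hne
          have hxlt : x < 0 := lt_of_le_of_ne hx0 hne
          have hapos : 0 < min (-x / 2) r := lt_min (by linarith) hr
          have := (h (min (-x / 2) r) hapos).1
          have h2 : -(min (-x / 2) r) ≤ x := le_trans (le_max_left _ _) this
          have h3 : min (-x / 2) r ≤ -x / 2 := min_le_left _ _
          linarith
        · rintro rfl
          exact fun a ha => ⟨max_le (by linarith) (by linarith), le_rfl⟩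
      rw [hinter] at this
      exact this
    exact Filter.Tendsto.ennrpow_const p h1
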